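/- arXiv:2310.20359 — 2 statements merged into one kernel-verified Lean document; each statement's English description precedes it below -/
import Mathlib

section
/- Let X be a locally Lindelöf regular space with countable pseudocharacter and countable tightness (ψ(X) = t(X) = ω) and |X| > 𝔠. Then there is a clopen subset U of X with |U| = L(U) = 𝔠. -/
open Cardinal Set

set_option linter.unusedVariables false
set_option linter.unusedSectionVars false

namespace S17


abbrev W : Type := Cardinal.continuum.ord.ToType

theorem mk_W : #W = Cardinal.continuum := by rw [Cardinal.mk_toType, Cardinal.card_ord]

instance : Nonempty W := by
  rw [Ordinal.toType_nonempty_iff_ne_zero]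
  intro h
  have := Cardinal.card_ord Cardinal.continuum
  rw [h] at this
  simp at this
  exact continuum_ne_zero this.symm

theorem mk_Iio (i : W) : #(Set.Iio i) < Cardinal.continuum := Cardinal.mk_Iio_ord_toType i

theorem mk_Iic (i : W) : #(Set.Iic i) < Cardinal.continuum := by
  have h : (Set.Iic i) ⊆ insert i (Set.Iio i) := by
    intro j hj
    have hj' : j ≤ i := Set.mem_Iic.mp hj
    rcases lt_or_eq_of_le hj' with h | h
    · exact Set.mem_insert_of_mem _ h
    · rw [h]; exact Set.mem_insert _ _
  calc #(Set.Iic i) ≤ #(insert i (Set.Iio i) : Set W) := mk_le_mk_of_subset h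
    _ ≤ #(Set.Iio i) + 1 := mk_insert_le
    _ < Cardinal.continuum := by
        have h1 := mk_Iio i
        rcases le_or_gt ℵ₀ #(Set.Iio i) with h2 | h2
        · rwa [add_one_eq h2]
        · exact lt_of_lt_of_le (add_lt_aleph0 h2 one_lt_aleph0) aleph0_le_continuum

/-- If a subset of a downward-closed set `T` covers less than `#T` via initial segments,
it is strictly bounded inside `T`. -/
theorem exists_bound_of_card {T : Set W} (hT : ∀ ⦃j i : W⦄, j ≤ i → i ∈ T → j ∈ T)
    {S : Set W} (hS : S ⊆ T) (hcard : #(⋃ s : S, Set.Iic s.1) < #T) :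
    ∃ k ∈ T, ∀ s ∈ S, s < k := by
  have h : ¬ (T ⊆ ⋃ s : S, Set.Iic s.1) := by
    intro h
    exact absurd (mk_le_mk_of_subset h) (not_le_of_gt hcard)
  rw [Set.not_subset] at h
  obtain ⟨k, hkT, hk⟩ := h
  refine ⟨k, hkT, fun s hs => ?_⟩
  by_contra hlt
  push_neg at hlt
  exact hk (Set.mem_iUnion.2 ⟨⟨s, hs⟩, hlt⟩)

theorem card_iUnion_Iic_countable {S : Set W} (hS : S.Countable) :
    #(⋃ s : S, Set.Iic s.1) < Cardinal.continuum := by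
  haveI : Countable S := hS.to_subtype
  calc #(⋃ s : S, Set.Iic s.1) ≤ Cardinal.sum (fun s : S => #(Set.Iic s.1)) :=
        mk_iUnion_le_sum_mk
    _ < Cardinal.prod (fun _ : S => Cardinal.continuum) :=
        Cardinal.sum_lt_prod _ _ (fun s => mk_Iic s.1)
    _ = Cardinal.continuum ^ #S := Cardinal.prod_const' _ _
    _ ≤ Cardinal.continuum ^ ℵ₀ := power_le_power_left continuum_ne_zero mk_le_aleph0
    _ = Cardinal.continuum := continuum_power_aleph0

/-- countable subsets of `W` are strictly bounded -/
theorem countable_bounded {S : Set W} (hS : S.Countable) : ∃ k : W, ∀ s ∈ S, s < k := by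
  have h := exists_bound_of_card (T := Set.univ) (fun _ _ _ _ => Set.mem_univ _)
    (Set.subset_univ S) (by rw [mk_univ, mk_W]; exact card_iUnion_Iic_countable hS)
  obtain ⟨k, _, hk⟩ := h
  exact ⟨k, hk⟩

theorem no_max (i : W) : ∃ k : W, i < k := by
  obtain ⟨k, hk⟩ := countable_bounded (S := {i}) (Set.countable_singleton i)
  exact ⟨k, hk i rfl⟩


/-- initial segment of `W` of "length" `lam` -/
def Tseg (lam : Cardinal) : Set W := {i : W | #(Set.Iio i) < lam}

theorem Tseg_down {lam : Cardinal} : ∀ ⦃j i : W⦄, j ≤ i → i ∈ Tseg lam → j ∈ Tseg lam := by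
  intro j i hji hi
  exact lt_of_le_of_lt (mk_le_mk_of_subset (fun z hz => lt_of_lt_of_le hz hji)) hi


theorem le_mk_Tseg {lam : Cardinal} (h : lam ≤ Cardinal.continuum) : lam ≤ #(Tseg lam) := by
  by_cases hU : Tseg lam = Set.univ
  · rw [hU, mk_univ, mk_W]; exact h
  · have hne : (Tseg lam)ᶜ.Nonempty := by
      rw [Set.nonempty_compl]; exact hU
    obtain ⟨m, hm, hmin⟩ := (wellFounded_lt (α := W)).has_min (Tseg lam)ᶜ hne
    have hsub : Set.Iio m ⊆ Tseg lam := by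
      intro j hj
      by_contra hjc
      exact hmin j hjc hj
    have hmn : ¬ (#(Set.Iio m) < lam) := hm
    push_neg at hmn
    exact hmn.trans (mk_le_mk_of_subset hsub)

theorem mk_Iic_le_of_Tseg {k : Cardinal} (hk : ℵ₀ ≤ k) {s : W}
    (hs : s ∈ Tseg (Order.succ k)) : #(Set.Iic s) ≤ k := by
  have h1 : #(Set.Iio s) ≤ k := Order.lt_succ_iff.mp hs
  have h : (Set.Iic s) ⊆ insert s (Set.Iio s) := by
    intro j hj
    have hj' : j ≤ s := Set.mem_Iic.mp hj
    rcases lt_or_eq_of_le hj' with h | h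
    · exact Set.mem_insert_of_mem _ h
    · rw [h]; exact Set.mem_insert _ _
  calc #(Set.Iic s) ≤ #(insert s (Set.Iio s) : Set W) := mk_le_mk_of_subset h
    _ ≤ #(Set.Iio s) + 1 := mk_insert_le
    _ ≤ k + 1 := by exact add_le_add_left h1 1
    _ = k := by
        rw [add_one_eq hk]


/-- subsets of the segment `Tseg (succ k)` of size `≤ k` are bounded within the segment -/
theorem Tseg_bounded {k : Cardinal} (hk : ℵ₀ ≤ k) (hk2 : Order.succ k ≤ Cardinal.continuum)
    {S : Set W} (hS : S ⊆ Tseg (Order.succ k)) (hcard : #S ≤ k) :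
    ∃ b ∈ Tseg (Order.succ k), ∀ s ∈ S, s < b := by
  apply exists_bound_of_card Tseg_down hS
  calc #(⋃ s : S, Set.Iic s.1) ≤ Cardinal.sum (fun s : S => #(Set.Iic s.1)) :=
        mk_iUnion_le_sum_mk
    _ ≤ Cardinal.sum (fun _ : S => k) :=
        Cardinal.sum_le_sum _ _ (fun s => mk_Iic_le_of_Tseg hk (hS s.2))
    _ = k * #S := by rw [Cardinal.sum_const' _ k]; ring
    _ ≤ k * k := mul_le_mul_right hcard k
    _ = k := mul_eq_self hk
    _ < Order.succ k := Order.lt_succ _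
    _ ≤ #(Tseg (Order.succ k)) := le_mk_Tseg hk2


variable {X : Type} [TopologicalSpace X]

theorem mem_closure_inter {A O : Set X} (hO : IsOpen O) {x : X}
    (hx : x ∈ closure A) (hxO : x ∈ O) : x ∈ closure (A ∩ O) := by
  rw [mem_closure_iff] at hx ⊢
  intro V hV hxV
  have := hx (V ∩ O) (hV.inter hO) ⟨hxV, hxO⟩
  obtain ⟨y, ⟨hy1, hy2⟩, hy3⟩ := this
  exact ⟨y, hy1, hy3, hy2⟩

theorem exists_G [RegularSpace X]
    (hpsi : ∀ x : X, ∃ G : ℕ → Set X, (∀ n, IsOpen (G n)) ∧ (⋂ n, G n) = {x}) :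
    ∃ Gd : ℕ → X → Set X, (∀ n x, IsOpen (Gd n x)) ∧ (∀ n x, x ∈ Gd n x) ∧
      (∀ x, (⋂ n, closure (Gd n x)) = {x}) := by
  have key : ∀ x : X, ∃ Gd : ℕ → Set X, (∀ n, IsOpen (Gd n)) ∧ (∀ n, x ∈ Gd n) ∧
      (⋂ n, closure (Gd n)) = {x} := by
    intro x
    obtain ⟨G, hGo, hGi⟩ := hpsi x
    have hxG : ∀ n, x ∈ G n := by
      intro n
      have : x ∈ ⋂ n, G n := by rw [hGi]; exact rfl
      exact Set.mem_iInter.mp this n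
    have : ∀ n : ℕ, ∃ V : Set X, IsOpen V ∧ x ∈ V ∧ closure V ⊆ G n := by
      intro n
      obtain ⟨C, hC1, hC2, hC3⟩ := exists_mem_nhds_isClosed_subset ((hGo n).mem_nhds (hxG n))
      refine ⟨interior C, isOpen_interior, mem_interior_iff_mem_nhds.mpr hC1, ?_⟩
      exact (closure_minimal interior_subset hC2).trans hC3
    choose V hVo hVx hVc using this
    refine ⟨V, hVo, hVx, ?_⟩
    apply Set.Subset.antisymm
    · intro y hy
      rw [← hGi]
      exact Set.mem_iInter.mpr fun n => hVc n (Set.mem_iInter.mp hy n)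
    · intro y hy
      rw [Set.mem_singleton_iff] at hy
      subst hy
      exact Set.mem_iInter.mpr fun n => subset_closure (hVx n)
  choose Gd h1 h2 h3 using key
  exact ⟨fun n x => Gd x n, fun n x => h1 x n, fun n x => h2 x n, h3⟩

variable {Gd : ℕ → X → Set X}

theorem sep_of_ne {x y : X} (hGi : ∀ x, (⋂ n, closure (Gd n x)) = {x}) (hxy : y ≠ x) :
    ∃ n, y ∉ closure (Gd n x) := by
  by_contra h
  push_neg at h
  have : y ∈ ⋂ n, closure (Gd n x) := Set.mem_iInter.mpr h
  rw [hGi] at this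
  exact hxy this

theorem card_closure_countable (hGo : ∀ n x, IsOpen (Gd n x)) (hGm : ∀ n x, x ∈ Gd n x)
    (hGi : ∀ x, (⋂ n, closure (Gd n x)) = {x})
    {B : Set X} (hB : B.Countable) : #(closure B) ≤ Cardinal.continuum := by
  haveI : Countable B := hB.to_subtype
  have hinj : Function.Injective
      (fun x : closure B => (fun n => {b : B | (b : X) ∈ Gd n x.1} : ℕ → Set B)) := by
    rintro ⟨x, hx⟩ ⟨y, hy⟩ h
    simp only [Subtype.mk.injEq]
    by_contra hxy
    obtain ⟨n, hn⟩ := sep_of_ne hGi (Ne.symm (hxy : x ≠ y))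
    -- y ∉ closure (Gd n x)
    have htr : {b : B | (b : X) ∈ Gd n x} = {b : B | (b : X) ∈ Gd n y} := congrFun h n
    have hy2 : y ∈ closure (B ∩ Gd n y) := mem_closure_inter (hGo n y) hy (hGm n y)
    have hsub : B ∩ Gd n y ⊆ Gd n x := by
      rintro b ⟨hb1, hb2⟩
      have : (⟨b, hb1⟩ : B) ∈ {b : B | (b : X) ∈ Gd n y} := hb2
      rw [← htr] at this
      exact this
    exact hn (closure_mono hsub hy2)
  calc #(closure B) ≤ #(ℕ → Set B) := mk_le_of_injective hinj
    _ = #(Set B) ^ ℵ₀ := by rw [← Cardinal.power_def, mk_nat]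
    _ ≤ (2 ^ ℵ₀ : Cardinal) ^ ℵ₀ := by
        apply power_le_power_right
        rw [mk_set]
        exact power_le_power_left two_ne_zero mk_le_aleph0
    _ = Cardinal.continuum := by rw [two_power_aleph0, continuum_power_aleph0]

theorem card_countable_subsets {A : Set X} (hA : #A ≤ Cardinal.continuum) :
    #{B : Set X | B ⊆ A ∧ B.Countable} ≤ Cardinal.continuum := by
  classical
  set 𝒞 := {B : Set X | B ⊆ A ∧ B.Countable} with h𝒞
  have henc : ∀ B : 𝒞, ∃ o : Option (ℕ → A),
      (∀ f : ℕ → A, o = some f → B.1 = Subtype.val '' Set.range f) ∧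
      (o = none → B.1 = ∅) := by
    rintro ⟨B, hBA, hBc⟩
    by_cases h : B.Nonempty
    · obtain ⟨f, hf⟩ := hBc.exists_eq_range h
      have hmem : ∀ n, f n ∈ A := fun n => hBA (by rw [hf]; exact Set.mem_range_self n)
      refine ⟨some (fun n => ⟨f n, hmem n⟩), ?_, by intro hc; simp at hc⟩
      intro g hg
      simp only [Option.some.injEq] at hg
      subst hg
      simp only
      ext z
      simp only [Set.mem_image, Set.mem_range]
      constructor
      · intro hz
        rw [hf] at hz
        obtain ⟨n, hn⟩ := hz
        exact ⟨⟨f n, hmem n⟩, ⟨n, rfl⟩, hn⟩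
      · rintro ⟨w, ⟨n, rfl⟩, rfl⟩
        rw [hf]
        exact ⟨n, rfl⟩
    · refine ⟨none, fun f hf => by simp at hf, fun _ => ?_⟩
      rw [Set.not_nonempty_iff_eq_empty] at h
      exact h
  choose enc hencs hencn using henc
  have hinj : Function.Injective enc := by
    rintro B C h
    rcases hoB : enc B with _ | f
    · rcases hoC : enc C with _ | g
      · exact Subtype.ext ((hencn B hoB).trans (hencn C hoC).symm)
      · rw [hoB, hoC] at h; simp at h
    · rcases hoC : enc C with _ | g
      · rw [hoB, hoC] at h; simp at h
      · rw [hoB, hoC] at h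
        simp only [Option.some.injEq] at h
        subst h
        exact Subtype.ext ((hencs B f hoB).trans (hencs C f hoC).symm)
  calc #𝒞 ≤ #(Option (ℕ → A)) := mk_le_of_injective hinj
    _ = #(ℕ → A) + 1 := mk_option
    _ ≤ Cardinal.continuum + 1 := by
        apply add_le_add_left
        calc #(ℕ → A) = #A ^ ℵ₀ := by rw [← Cardinal.power_def, mk_nat]
          _ ≤ Cardinal.continuum ^ ℵ₀ := power_le_power_right hA
          _ = Cardinal.continuum := continuum_power_aleph0
    _ = Cardinal.continuum := by
        rw [add_one_eq aleph0_le_continuum]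

theorem card_closure_le
    (ht : ∀ (x : X) (A : Set X), x ∈ closure A → ∃ B ⊆ A, B.Countable ∧ x ∈ closure B)
    (hGo : ∀ n x, IsOpen (Gd n x)) (hGm : ∀ n x, x ∈ Gd n x)
    (hGi : ∀ x, (⋂ n, closure (Gd n x)) = {x})
    {A : Set X} (hA : #A ≤ Cardinal.continuum) : #(closure A) ≤ Cardinal.continuum := by
  classical
  set 𝒞 := {B : Set X | B ⊆ A ∧ B.Countable} with h𝒞
  have hsub : closure A ⊆ ⋃ B : 𝒞, closure B.1 := by
    intro x hx
    obtain ⟨B, hBA, hBc, hxB⟩ := ht x A hx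
    exact Set.mem_iUnion.mpr ⟨⟨B, hBA, hBc⟩, hxB⟩
  calc #(closure A) ≤ #(⋃ B : 𝒞, closure B.1) := mk_le_mk_of_subset hsub
    _ ≤ #𝒞 * ⨆ B : 𝒞, #(closure B.1) := mk_iUnion_le _
    _ ≤ Cardinal.continuum * Cardinal.continuum := by
        apply mul_le_mul'
        · exact card_countable_subsets hA
        · exact ciSup_le' (fun B => card_closure_countable hGo hGm hGi B.2.2)
    _ = Cardinal.continuum := mul_eq_self aleph0_le_continuum


section Chain
variable {X : Type} [TopologicalSpace X]

/-- transfinite iteration of `step` along `W` -/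
noncomputable def chain (step : Set X → Set X) : W → Set X :=
  (IsWellFounded.wf (α := W) (r := (· < ·))).fix
    (fun i rec => step (⋃ j : {j : W // j < i}, rec j j.2))

/-- union of all earlier stages -/
noncomputable def Dset (step : Set X → Set X) (i : W) : Set X :=
  ⋃ j : {j : W // j < i}, chain step j

theorem chain_eq (step : Set X → Set X) (i : W) : chain step i = step (Dset step i) := by
  rw [chain, WellFounded.fix_eq]
  rfl

theorem chain_subset_Dset (step : Set X → Set X) {j i : W} (h : j < i) :
    chain step j ⊆ Dset step i := by
  intro x hx
  exact Set.mem_iUnion.mpr ⟨⟨j, h⟩, hx⟩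

theorem mk_Dset_le (step : Set X → Set X) (i : W)
    (h : ∀ j : W, j < i → #(chain step j) ≤ Cardinal.continuum) :
    #(Dset step i) ≤ Cardinal.continuum := by
  calc #(Dset step i) ≤ Cardinal.sum (fun j : {j : W // j < i} => #(chain step j.1)) :=
        mk_iUnion_le_sum_mk
    _ ≤ Cardinal.sum (fun _ : {j : W // j < i} => Cardinal.continuum) :=
        Cardinal.sum_le_sum _ _ (fun j => h j.1 j.2)
    _ = #{j : W // j < i} * Cardinal.continuum := Cardinal.sum_const' _ _
    _ ≤ Cardinal.continuum * Cardinal.continuum := by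
        apply mul_le_mul'
        · exact (mk_Iio i).le
        · exact le_rfl
    _ = Cardinal.continuum := mul_eq_self aleph0_le_continuum

/-- the full union of a chain -/
noncomputable def chainU (step : Set X → Set X) : Set X := ⋃ i : W, chain step i

theorem mk_chainU_le (step : Set X → Set X)
    (h : ∀ j : W, #(chain step j) ≤ Cardinal.continuum) :
    #(chainU step) ≤ Cardinal.continuum := by
  calc #(chainU step) ≤ Cardinal.sum (fun j : W => #(chain step j)) := mk_iUnion_le_sum_mk
    _ ≤ Cardinal.sum (fun _ : W => Cardinal.continuum) := Cardinal.sum_le_sum _ _ (fun j => h j)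
    _ = #W * Cardinal.continuum := Cardinal.sum_const' _ _
    _ = Cardinal.continuum := by rw [mk_W]; exact mul_eq_self aleph0_le_continuum

/-- if each countable subset of the union lands in a single stage whose closure is inside a
later stage, the union is closed -/
theorem chainU_closed (step : Set X → Set X)
    (ht : ∀ (x : X) (A : Set X), x ∈ closure A → ∃ B ⊆ A, B.Countable ∧ x ∈ closure B)
    (hmono : ∀ {j i : W}, j < i → chain step j ⊆ chain step i)
    (hcl : ∀ i : W, ∃ k : W, closure (chain step i) ⊆ chain step k) :
    IsClosed (chainU step) := by
  rw [← closure_subset_iff_isClosed]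
  intro x hx
  obtain ⟨B, hBsub, hBc, hxB⟩ := ht x _ hx
  classical
  have hst : ∀ b : B, ∃ i : W, (b : X) ∈ chain step i := by
    rintro ⟨b, hb⟩
    exact Set.mem_iUnion.mp (hBsub hb)
  choose st hst using hst
  haveI := hBc.to_subtype
  obtain ⟨k, hk⟩ := countable_bounded (S := Set.range st) (Set.countable_range st)
  have hBk : B ⊆ chain step k := by
    intro b hb
    exact hmono (hk (st ⟨b, hb⟩) (Set.mem_range_self _)) (hst ⟨b, hb⟩)
  obtain ⟨k', hk'⟩ := hcl k
  have : x ∈ closure (chain step k) := closure_mono hBk hxB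
  exact Set.mem_iUnion.mpr ⟨k', hk' this⟩

end Chain

section Arh
variable {X : Type} [TopologicalSpace X] {Gd : ℕ → X → Set X}

/-- Arhangelskii-Shapirovskii: a closed Lindelöf subset has cardinality at most continuum. -/
theorem card_lindelof_le
    (ht : ∀ (x : X) (A : Set X), x ∈ closure A → ∃ B ⊆ A, B.Countable ∧ x ∈ closure B)
    (hGo : ∀ n x, IsOpen (Gd n x)) (hGm : ∀ n x, x ∈ Gd n x)
    (hGi : ∀ x, (⋂ n, closure (Gd n x)) = {x})
    {C : Set X} (hC : IsLindelof C) (hCc : IsClosed C) : #C ≤ Cardinal.continuum := by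
  classical
  rcases Set.eq_empty_or_nonempty C with hCe | ⟨x₀, hx₀⟩
  · rw [hCe]; simp
  -- the witness function
  set w : (ℕ → X × ℕ) → X := fun g =>
    if h : (C \ ⋃ i, Gd (g i).2 (g i).1).Nonempty then h.choose else x₀ with hw
  have hwC : ∀ g, w g ∈ C := by
    intro g
    by_cases h : (C \ ⋃ i, Gd (g i).2 (g i).1).Nonempty
    · rw [show w g = h.choose from dif_pos h]
      exact h.choose_spec.1
    · rw [show w g = x₀ from dif_neg h]
      exact hx₀
  set Wit : Set X → Set X := fun S => w '' {g | ∀ i, (g i).1 ∈ S} with hWit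
  have hWitC : ∀ S, Wit S ⊆ C := by
    rintro S x ⟨g, hg, rfl⟩
    exact hwC g
  have hWitmono : ∀ {S T : Set X}, S ⊆ T → Wit S ⊆ Wit T := by
    rintro S T hST x ⟨g, hg, rfl⟩
    exact ⟨g, fun i => hST (hg i), rfl⟩
  have hWitcard : ∀ S : Set X, #S ≤ Cardinal.continuum → #(Wit S) ≤ Cardinal.continuum := by
    intro S hS
    have h1 : #{g : ℕ → X × ℕ | ∀ i, (g i).1 ∈ S} ≤ #(ℕ → S × ℕ) := by
      apply mk_le_of_injective (f := fun g : {g : ℕ → X × ℕ | ∀ i, (g i).1 ∈ S} =>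
        (fun n => ((⟨(g.1 n).1, g.2 n⟩ : S), (g.1 n).2) : ℕ → S × ℕ))
      rintro ⟨g, hg⟩ ⟨g', hg'⟩ h
      simp only [Subtype.mk.injEq] at h ⊢
      funext n
      have := congrFun h n
      simp only [Prod.mk.injEq, Subtype.mk.injEq] at this
      exact Prod.ext this.1 this.2
    calc #(Wit S) ≤ #{g : ℕ → X × ℕ | ∀ i, (g i).1 ∈ S} := mk_image_le
      _ ≤ #(ℕ → S × ℕ) := h1
      _ = (#S * ℵ₀) ^ ℵ₀ := by rw [← Cardinal.power_def, mk_nat, mk_prod, lift_id, lift_id, mk_nat]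
      _ ≤ (Cardinal.continuum * ℵ₀) ^ ℵ₀ := by
          apply power_le_power_right
          exact mul_le_mul' hS le_rfl
      _ = Cardinal.continuum ^ ℵ₀ := by
          rw [mul_comm, aleph0_mul_eq aleph0_le_continuum]
      _ = Cardinal.continuum := continuum_power_aleph0
  -- the chain
  set step : Set X → Set X := fun S => closure ({x₀} ∪ S ∪ Wit S) with hstep
  have hstepC : ∀ S, S ⊆ C → step S ⊆ C := by
    intro S hS
    rw [hstep]
    apply closure_minimal _ hCc
    exact Set.union_subset (Set.union_subset (by simpa using hx₀) hS) (hWitC S)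
  have hchainC : ∀ i : W, chain step i ⊆ C := by
    intro i
    induction i using (IsWellFounded.wf (α := W) (r := (· < ·))).induction with
    | _ i IH =>
      rw [chain_eq]
      apply hstepC
      rintro x hx
      obtain ⟨⟨j, hj⟩, hxj⟩ := Set.mem_iUnion.mp hx
      exact IH j hj hxj
  have hchaincard : ∀ i : W, #(chain step i) ≤ Cardinal.continuum := by
    intro i
    induction i using (IsWellFounded.wf (α := W) (r := (· < ·))).induction with
    | _ i IH =>
      rw [chain_eq]
      have hD : #(Dset step i) ≤ Cardinal.continuum := mk_Dset_le step i IH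
      apply card_closure_le ht hGo hGm hGi
      calc #({x₀} ∪ Dset step i ∪ Wit (Dset step i) : Set X)
          ≤ #({x₀} ∪ Dset step i : Set X) + #(Wit (Dset step i)) := mk_union_le _ _
        _ ≤ (#({x₀} : Set X) + #(Dset step i)) + #(Wit (Dset step i)) := by
            exact add_le_add_left (mk_union_le _ _) _
        _ ≤ (1 + Cardinal.continuum) + Cardinal.continuum := by
            apply add_le_add
            apply add_le_add
            · simp
            · exact hD
            · exact hWitcard _ hD
        _ ≤ (Cardinal.continuum + Cardinal.continuum) + Cardinal.continuum := by
            gcongr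
            exact one_le_aleph0.trans aleph0_le_continuum
        _ = Cardinal.continuum := by
            rw [add_eq_self aleph0_le_continuum, add_eq_self aleph0_le_continuum]
  have hx₀chain : ∀ i : W, x₀ ∈ chain step i := by
    intro i
    rw [chain_eq]
    show x₀ ∈ closure ({x₀} ∪ Dset step i ∪ Wit (Dset step i))
    exact subset_closure (Or.inl (Or.inl rfl))
  have hmono : ∀ {j i : W}, j < i → chain step j ⊆ chain step i := by
    intro j i hji
    rw [chain_eq step i]
    show _ ⊆ closure ({x₀} ∪ Dset step i ∪ Wit (Dset step i))
    refine (chain_subset_Dset step hji).trans ?_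
    refine Set.Subset.trans ?_ subset_closure
    exact Set.subset_union_left.trans' Set.subset_union_right |>.trans (le_refl _)
  have hWitsub : ∀ i : W, Wit (Dset step i) ⊆ chain step i := by
    intro i
    rw [chain_eq step i]
    show _ ⊆ closure ({x₀} ∪ Dset step i ∪ Wit (Dset step i))
    exact Set.subset_union_right.trans subset_closure
  set Ft : Set X := chainU step with hFt
  have hFtC : Ft ⊆ C := Set.iUnion_subset hchainC
  have hFtclosed : IsClosed Ft := by
    apply chainU_closed step ht hmono
    intro i
    obtain ⟨k, hk⟩ := no_max i
    refine ⟨k, ?_⟩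
    have : IsClosed (chain step k) := by rw [chain_eq]; exact isClosed_closure
    exact (closure_mono (hmono hk)).trans (this.closure_subset)
  have hFtcard : #Ft ≤ Cardinal.continuum := mk_chainU_le step hchaincard
  -- main claim : C ⊆ Ft
  have hCFt : C ⊆ Ft := by
    by_contra hsub
    rw [Set.not_subset] at hsub
    obtain ⟨z, hzC, hzF⟩ := hsub
    set V : X × ℕ → Set X := fun p =>
      if p.1 ∈ Ft ∧ z ∉ closure (Gd p.2 p.1) then Gd p.2 p.1 else ∅ with hV
    have hVo : ∀ p, IsOpen (V p) := by
      intro p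
      by_cases hcond : p.1 ∈ Ft ∧ z ∉ closure (Gd p.2 p.1)
      · rw [show V p = Gd p.2 p.1 from if_pos hcond]
        exact hGo _ _
      · rw [show V p = ∅ from if_neg hcond]
        exact isOpen_empty
    have hcover : Ft ⊆ ⋃ p, V p := by
      intro y hy
      have hzy : z ≠ y := by rintro rfl; exact hzF hy
      obtain ⟨n, hn⟩ := sep_of_ne hGi hzy
      refine Set.mem_iUnion.mpr ⟨(y, n), ?_⟩
      rw [show V (y, n) = Gd n y from if_pos ⟨hy, hn⟩]
      exact hGm n y
    obtain ⟨t, htc, htsub⟩ := (hC.of_isClosed_subset hFtclosed hFtC).elim_countable_subcover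
      V hVo hcover
    set t' : Set (X × ℕ) := {p ∈ t | p.1 ∈ Ft ∧ z ∉ closure (Gd p.2 p.1)} with ht'
    have ht'c : t'.Countable := htc.mono (Set.sep_subset _ _)
    have ht'sub : Ft ⊆ ⋃ p ∈ t', Gd p.2 p.1 := by
      intro y hy
      obtain ⟨p, hp⟩ := Set.mem_iUnion.mp (htsub hy)
      simp only [Set.mem_iUnion, exists_prop] at hp
      obtain ⟨hpt, hpy⟩ := hp
      by_cases hcond : p.1 ∈ Ft ∧ z ∉ closure (Gd p.2 p.1)
      · rw [show V p = Gd p.2 p.1 from if_pos hcond] at hpy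
        exact Set.mem_biUnion ⟨hpt, hcond⟩ hpy
      · rw [show V p = ∅ from if_neg hcond] at hpy
        exact absurd hpy (Set.notMem_empty y)
    have ht'ne : t'.Nonempty := by
      obtain ⟨p, hp⟩ := Set.mem_iUnion.mp (ht'sub (Set.mem_iUnion.mpr ⟨Classical.arbitrary W, hx₀chain _⟩))
      simp only [Set.mem_iUnion, exists_prop] at hp
      exact ⟨p, hp.1⟩
    obtain ⟨e, he⟩ := ht'c.exists_eq_range ht'ne
    -- each coordinate of e lies in some stage
    have hstg : ∀ n : ℕ, ∃ i : W, (e n).1 ∈ chain step i := by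
      intro n
      have : e n ∈ t' := by rw [he]; exact Set.mem_range_self n
      exact Set.mem_iUnion.mp this.2.1
    choose st hst using hstg
    obtain ⟨k, hk⟩ := countable_bounded (S := Set.range st) (Set.countable_range st)
    have hek : ∀ n, (e n).1 ∈ Dset step k := by
      intro n
      exact chain_subset_Dset step (hk (st n) (Set.mem_range_self n)) (hst n)
    have hwg : w e ∈ Wit (Dset step k) := ⟨e, hek, rfl⟩
    have hwgFt : w e ∈ Ft := Set.mem_iUnion.mpr ⟨k, hWitsub k hwg⟩
    -- but w e avoids all the Gd's
    have hne : (C \ ⋃ i, Gd (e i).2 (e i).1).Nonempty := by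
      refine ⟨z, hzC, ?_⟩
      intro hz
      obtain ⟨n, hn⟩ := Set.mem_iUnion.mp hz
      have : e n ∈ t' := by rw [he]; exact Set.mem_range_self n
      exact this.2.2 (subset_closure hn)
    have hwe : w e ∈ C \ ⋃ i, Gd (e i).2 (e i).1 := by
      rw [show w e = hne.choose from dif_pos hne]
      exact hne.choose_spec
    obtain ⟨p, hp⟩ := Set.mem_iUnion.mp (ht'sub hwgFt)
    simp only [Set.mem_iUnion, exists_prop] at hp
    obtain ⟨hpt', hpmem⟩ := hp
    obtain ⟨n, hn⟩ := by rw [he] at hpt'; exact hpt'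
    apply hwe.2
    apply Set.mem_iUnion.mpr ⟨n, ?_⟩
    rw [hn]
    exact hpmem
  exact (mk_le_mk_of_subset hCFt).trans hFtcard

end Arh

section Main
variable {X : Type} [TopologicalSpace X] [RegularSpace X] {Gd : ℕ → X → Set X}

theorem exists_small_nhd
    (hlL : ∀ x : X, ∃ U ∈ nhds x, IsLindelof U)
    (ht : ∀ (x : X) (A : Set X), x ∈ closure A → ∃ B ⊆ A, B.Countable ∧ x ∈ closure B)
    (hGo : ∀ n x, IsOpen (Gd n x)) (hGm : ∀ n x, x ∈ Gd n x)
    (hGi : ∀ x, (⋂ n, closure (Gd n x)) = {x}) (x : X) :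
    ∃ O : Set X, IsOpen O ∧ x ∈ O ∧ #O ≤ Cardinal.continuum := by
  obtain ⟨N, hN, hNl⟩ := hlL x
  obtain ⟨Cc, hCn, hCc, hCsub⟩ := exists_mem_nhds_isClosed_subset hN
  have hClin : IsLindelof Cc := hNl.of_isClosed_subset hCc hCsub
  have hCcard : #Cc ≤ Cardinal.continuum := card_lindelof_le ht hGo hGm hGi hClin hCc
  exact ⟨interior Cc, isOpen_interior, mem_interior_iff_mem_nhds.mpr hCn,
    (mk_le_mk_of_subset interior_subset).trans hCcard⟩

end Main

end S17

/-- The Lindelöf number of a subset: the least cardinal `λ` such that every open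
cover has a subcover of cardinality `≤ λ`. -/
noncomputable def lindelofNumber {X : Type} [TopologicalSpace X] (s : Set X) : Cardinal :=
  sInf {κ | ∀ 𝒰 : Set (Set X), (∀ U ∈ 𝒰, IsOpen U) → s ⊆ ⋃₀ 𝒰 →
    ∃ 𝒱 ⊆ 𝒰, Cardinal.mk 𝒱 ≤ κ ∧ s ⊆ ⋃₀ 𝒱}

/-- If `X` is a locally Lindelöf regular space with countable pseudocharacter and
countable tightness and `|X| > 𝔠`, then `X` has a clopen subset `U` with
`|U| = L(U) = 𝔠`. -/
theorem stmt_17 (X : Type) [TopologicalSpace X] [RegularSpace X]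
    (hlL : ∀ x : X, ∃ U ∈ nhds x, IsLindelof U)
    (hpsi : ∀ x : X, ∃ G : ℕ → Set X, (∀ n, IsOpen (G n)) ∧ (⋂ n, G n) = {x})
    (ht : ∀ (x : X) (A : Set X), x ∈ closure A →
      ∃ B ⊆ A, B.Countable ∧ x ∈ closure B)
    (hX : Cardinal.continuum < Cardinal.mk X) :
    ∃ U : Set X, IsClopen U ∧ Cardinal.mk U = Cardinal.continuum ∧
      lindelofNumber U = Cardinal.continuum := by
  classical
  obtain ⟨Gd, hGo, hGm, hGi⟩ := S17.exists_G hpsi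
  haveI hXne : Nonempty X := by
    by_contra h
    rw [not_nonempty_iff] at h
    rw [Cardinal.mk_eq_zero X] at hX
    exact absurd hX (by simp)
  choose nb hnbo hnbm hnbc using S17.exists_small_nhd hlL ht hGo hGm hGi
  set pt : Set X → X := fun S =>
    if h : ∃ y, y ∉ closure S then h.choose else Classical.arbitrary X with hptd
  set mstep : Set X → Set X := fun S => ⋃ x : ↥(closure S ∪ {pt S}), nb x.1 with hmstepd
  have hstep_open : ∀ S, IsOpen (mstep S) := fun S => isOpen_iUnion (fun x => hnbo x.1)
  have hstep_clsub : ∀ S : Set X, closure S ⊆ mstep S := by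
    intro S x hx
    exact Set.mem_iUnion.mpr ⟨⟨x, Or.inl hx⟩, hnbm x⟩
  have hstep_pt : ∀ S : Set X, pt S ∈ mstep S := by
    intro S
    exact Set.mem_iUnion.mpr ⟨⟨pt S, Or.inr rfl⟩, hnbm _⟩
  have hstep_card : ∀ S : Set X, #S ≤ Cardinal.continuum → #(mstep S) ≤ Cardinal.continuum := by
    intro S hS
    have hclo : #(closure S) ≤ Cardinal.continuum := S17.card_closure_le ht hGo hGm hGi hS
    have hidx : #(↥(closure S ∪ {pt S})) ≤ Cardinal.continuum := by
      calc #(↥(closure S ∪ {pt S})) ≤ #(closure S) + #({pt S} : Set X) :=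
            Cardinal.mk_union_le _ _
        _ ≤ Cardinal.continuum + 1 := by
            apply add_le_add hclo
            simp
        _ = Cardinal.continuum := by rw [Cardinal.add_one_eq Cardinal.aleph0_le_continuum]
    calc #(mstep S) ≤ Cardinal.sum (fun x : ↥(closure S ∪ {pt S}) => #(nb x.1)) :=
          Cardinal.mk_iUnion_le_sum_mk
      _ ≤ Cardinal.sum (fun _ : ↥(closure S ∪ {pt S}) => Cardinal.continuum) :=
          Cardinal.sum_le_sum _ _ (fun x => hnbc x.1)
      _ = #(↥(closure S ∪ {pt S})) * Cardinal.continuum := Cardinal.sum_const' _ _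
      _ ≤ Cardinal.continuum * Cardinal.continuum := mul_le_mul' hidx le_rfl
      _ = Cardinal.continuum := Cardinal.mul_eq_self Cardinal.aleph0_le_continuum
  have hpt_not : ∀ S : Set X, #S ≤ Cardinal.continuum → pt S ∉ closure S := by
    intro S hS
    have hne : ∃ y, y ∉ closure S := by
      by_contra h
      push_neg at h
      have huniv : closure S = Set.univ := Set.eq_univ_of_forall h
      have h2 : #(closure S) ≤ Cardinal.continuum := S17.card_closure_le ht hGo hGm hGi hS
      rw [huniv, Cardinal.mk_univ] at h2
      exact absurd (hX.trans_le h2) (lt_irrefl _)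
    rw [show pt S = hne.choose from dif_pos hne]
    exact hne.choose_spec
  set U : S17.W → Set X := S17.chain mstep with hUd
  set D : S17.W → Set X := S17.Dset mstep with hDd
  have hUeq : ∀ i, U i = mstep (D i) := fun i => S17.chain_eq mstep i
  have hUopen : ∀ i, IsOpen (U i) := fun i => (hUeq i) ▸ hstep_open (D i)
  have hUcard : ∀ i, #(U i) ≤ Cardinal.continuum := by
    intro i
    induction i using (IsWellFounded.wf (α := S17.W) (r := (· < ·))).induction with
    | _ i IH =>
      rw [hUeq i]
      exact hstep_card _ (S17.mk_Dset_le mstep i IH)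
  have hDcard : ∀ i, #(D i) ≤ Cardinal.continuum :=
    fun i => S17.mk_Dset_le mstep i (fun j _ => hUcard j)
  have hclD : ∀ i, closure (D i) ⊆ U i := fun i => (hUeq i) ▸ hstep_clsub (D i)
  have hUD : ∀ {j i : S17.W}, j < i → U j ⊆ D i := fun h => S17.chain_subset_Dset mstep h
  have hUU : ∀ {j i : S17.W}, j < i → U j ⊆ U i :=
    fun h => (hUD h).trans (subset_closure.trans (hclD _))
  set p : S17.W → X := fun i => pt (D i) with hpd
  have hpU : ∀ i, p i ∈ U i := fun i => (hUeq i) ▸ hstep_pt (D i)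
  have hpnot : ∀ i, p i ∉ closure (D i) := fun i => hpt_not _ (hDcard i)
  set Ut : Set X := S17.chainU mstep with hUtd
  have hUtopen : IsOpen Ut := isOpen_iUnion hUopen
  have hUtclosed : IsClosed Ut := by
    apply S17.chainU_closed mstep ht (fun {j i} h => hUU h)
    intro i
    obtain ⟨k, hk⟩ := S17.no_max i
    exact ⟨k, (closure_mono (hUD hk)).trans (hclD k)⟩
  have hpinj : Function.Injective p := by
    intro i j hij
    by_contra hne
    rcases lt_trichotomy i j with h | h | h
    · have he : p i ∈ closure (D j) := subset_closure ((hUD h) (hpU i))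
      rw [hij] at he
      exact hpnot j he
    · exact hne h
    · have he : p j ∈ closure (D i) := subset_closure ((hUD h) (hpU j))
      rw [← hij] at he
      exact hpnot i he
  have hUtmem : ∀ i, p i ∈ Ut := fun i => Set.mem_iUnion.mpr ⟨i, hpU i⟩
  have hUtcard : #Ut = Cardinal.continuum := by
    apply le_antisymm (S17.mk_chainU_le mstep hUcard)
    have hinj2 : Function.Injective (fun i : S17.W => (⟨p i, hUtmem i⟩ : Ut)) := by
      intro i j h
      apply hpinj
      exact congrArg Subtype.val h
    have := Cardinal.mk_le_of_injective hinj2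
    rwa [S17.mk_W] at this
  set LSet : Set Cardinal := {κ | ∀ 𝒰 : Set (Set X), (∀ V ∈ 𝒰, IsOpen V) → Ut ⊆ ⋃₀ 𝒰 →
    ∃ 𝒱 ⊆ 𝒰, Cardinal.mk 𝒱 ≤ κ ∧ Ut ⊆ ⋃₀ 𝒱} with hLSetd
  have hmemc : Cardinal.continuum ∈ LSet := by
    intro 𝒰 h𝒰o h𝒰c
    have hch : ∀ x : Ut, ∃ v, v ∈ 𝒰 ∧ (x : X) ∈ v := by
      intro x
      obtain ⟨v, hv1, hv2⟩ := h𝒰c x.2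
      exact ⟨v, hv1, hv2⟩
    choose c hc1 hc2 using hch
    refine ⟨Set.range c, ?_, ?_, ?_⟩
    · rintro v ⟨x, rfl⟩
      exact hc1 x
    · calc #(Set.range c) ≤ #Ut := Cardinal.mk_range_le
        _ = Cardinal.continuum := hUtcard
    · intro x hx
      exact ⟨c ⟨x, hx⟩, Set.mem_range_self _, hc2 ⟨x, hx⟩⟩
  have hlow : ∀ m ∈ LSet, Cardinal.continuum ≤ m := by
    intro m hm
    by_contra hml
    push_neg at hml
    set k : Cardinal := m ⊔ ℵ₀ with hkdef
    have hk : ℵ₀ ≤ k := le_sup_right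
    have hkc : k < Cardinal.continuum :=
      sup_lt_iff.mpr ⟨hml, Cardinal.aleph0_lt_continuum⟩
    have hk2 : Order.succ k ≤ Cardinal.continuum := Order.succ_le_of_lt hkc
    set T : Set S17.W := S17.Tseg (Order.succ k) with hTd
    have hTne : T.Nonempty := by
      have hle := S17.le_mk_Tseg hk2
      rw [← Set.nonempty_coe_sort, ← Cardinal.mk_ne_zero_iff]
      intro h0
      rw [h0] at hle
      have : Order.succ k = 0 := le_antisymm hle zero_le
      have h1 : k < Order.succ k := Order.lt_succ k
      rw [this] at h1
      exact absurd h1 (by simp)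
    obtain ⟨i₀, hi₀⟩ := hTne
    set Cset : Set X := closure (p '' T) with hCsetd
    set 𝒰 : Set (Set X) := insert Csetᶜ {V | ∃ i ∈ T, V = U i} with h𝒰d
    have h𝒰o : ∀ V ∈ 𝒰, IsOpen V := by
      intro V hV
      rcases Set.mem_insert_iff.mp hV with rfl | ⟨i, hi, rfl⟩
      · exact isClosed_closure.isOpen_compl
      · exact hUopen i
    have h𝒰c : Ut ⊆ ⋃₀ 𝒰 := by
      intro x hx
      by_cases hxC : x ∈ Cset
      · obtain ⟨B, hB1, hB2, hB3⟩ := ht x _ hxC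
        have hidx : ∀ b : B, ∃ i, i ∈ T ∧ p i = (b : X) := by
          rintro ⟨b, hb⟩
          obtain ⟨i, hi, hpi⟩ := hB1 hb
          exact ⟨i, hi, hpi⟩
        choose idx hidx1 hidx2 using hidx
        haveI := hB2.to_subtype
        obtain ⟨bb, hbbT, hbb⟩ := S17.Tseg_bounded hk hk2 (S := Set.range idx)
          (by rintro s ⟨b, rfl⟩; exact hidx1 b)
          ((Set.countable_range idx).le_aleph0.trans hk)
        have hBD : B ⊆ D bb := by
          intro b hb
          have hpb : p (idx ⟨b, hb⟩) = b := hidx2 ⟨b, hb⟩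
          rw [← hpb]
          exact (hUD (hbb _ (Set.mem_range_self _))) (hpU _)
        have hxU : x ∈ U bb := hclD bb (closure_mono hBD hB3)
        exact ⟨U bb, Set.mem_insert_of_mem _ ⟨bb, hbbT, rfl⟩, hxU⟩
      · exact ⟨Csetᶜ, Set.mem_insert _ _, hxC⟩
    obtain ⟨𝒱, h𝒱sub, h𝒱card, h𝒱cover⟩ := hm 𝒰 h𝒰o h𝒰c
    have hq : ∀ v : 𝒱, ∃ i, i ∈ T ∧ ((∃ j ∈ T, (v : Set X) = U j) → (v : Set X) = U i) := by
      rintro ⟨v, hv⟩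
      by_cases h : ∃ j ∈ T, v = U j
      · obtain ⟨j, hj1, hj2⟩ := h
        exact ⟨j, hj1, fun _ => hj2⟩
      · exact ⟨i₀, hi₀, fun hc => absurd hc h⟩
    choose q hq1 hq2 using hq
    obtain ⟨σ, hσT, hσ⟩ := S17.Tseg_bounded hk hk2 (S := Set.range q)
      (by rintro s ⟨v, rfl⟩; exact hq1 v)
      (by calc #(Set.range q) ≤ #(↥𝒱) := Cardinal.mk_range_le
            _ ≤ m := h𝒱card
            _ ≤ k := le_sup_left)
    obtain ⟨v, hv𝒱, hpv⟩ := h𝒱cover (hUtmem σ)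
    rcases Set.mem_insert_iff.mp (h𝒱sub hv𝒱) with rfl | ⟨j, hjT, rfl⟩
    · exact hpv (subset_closure (Set.mem_image_of_mem p hσT))
    · have h2 := hq2 ⟨U j, hv𝒱⟩ ⟨j, hjT, rfl⟩
      have hlt : q ⟨U j, hv𝒱⟩ < σ := hσ _ (Set.mem_range_self _)
      have hmem : p σ ∈ closure (D σ) := subset_closure ((hUD hlt) (h2 ▸ hpv))
      exact hpnot σ hmem
  refine ⟨Ut, ⟨hUtclosed, hUtopen⟩, hUtcard, ?_⟩
  unfold lindelofNumber
  apply le_antisymm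
  · exact csInf_le' hmemc
  · exact le_csInf ⟨Cardinal.continuum, hmemc⟩ hlow
end

section
/- Every connected, locally 𝔠, sequential Hausdorff space has cardinality at most 𝔠. -/
open Cardinal Set Filter Topology

universe u

/-- In a Hausdorff space, the sequential closure of a set of cardinality at most `𝔠`
has cardinality at most `𝔠`. -/
lemma my_mk_seqClosure_le {X : Type u} [TopologicalSpace X] [T2Space X] {A : Set X}
    (h : #A ≤ 𝔠) : #(seqClosure A) ≤ 𝔠 := by
  have key : ∃ g : seqClosure A → (ℕ → A), Function.Injective g := by
    have hmem : ∀ x : seqClosure A, ∃ u : ℕ → X,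
        (∀ n, u n ∈ A) ∧ Tendsto u atTop (𝓝 (x : X)) := fun x => x.2
    choose u hu hlim using hmem
    refine ⟨fun x n => ⟨u x n, hu x n⟩, fun x y hxy => ?_⟩
    have : u x = u y := funext fun n => congrArg Subtype.val (congrFun hxy n)
    have := tendsto_nhds_unique (this ▸ hlim x) (hlim y)
    exact Subtype.ext this
  obtain ⟨g, hg⟩ := key
  calc #(seqClosure A) ≤ #(ℕ → A) := Cardinal.mk_le_of_injective hg
    _ = #A ^ (ℵ₀ : Cardinal.{u}) := by
        rw [Cardinal.mk_arrow]; simp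
    _ ≤ 𝔠 ^ (ℵ₀ : Cardinal.{u}) := Cardinal.power_le_power_right h
    _ = 𝔠 := Cardinal.continuum_power_aleph0

/-- Transfinite iteration of an operator on sets. -/
noncomputable def iterOp {X : Type u} (G : Set X → Set X) (A₀ : Set X) :
    Ordinal.{u} → Set X
  | o => A₀ ∪ ⋃ b : Set.Iio o, G (iterOp G A₀ b.1)
termination_by o => o
decreasing_by exact b.2

lemma iterOp_def {X : Type u} (G : Set X → Set X) (A₀ : Set X) (o : Ordinal.{u}) :
    iterOp G A₀ o = A₀ ∪ ⋃ b : Set.Iio o, G (iterOp G A₀ b.1) := by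
  rw [iterOp]

lemma iterOp_mono {X : Type u} (G : Set X → Set X) (A₀ : Set X) {o₁ o₂ : Ordinal.{u}}
    (h : o₁ ≤ o₂) : iterOp G A₀ o₁ ⊆ iterOp G A₀ o₂ := by
  rw [iterOp_def G A₀ o₁, iterOp_def G A₀ o₂]
  intro x hx
  rcases hx with hx | hx
  · exact Or.inl hx
  · obtain ⟨s, ⟨b, rfl⟩, hxs⟩ := hx
    exact Or.inr (Set.mem_iUnion.2 ⟨⟨b.1, lt_of_lt_of_le b.2 h⟩, hxs⟩)

lemma subset_iterOp_self {X : Type u} (G : Set X → Set X) (A₀ : Set X) (o : Ordinal.{u}) :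
    A₀ ⊆ iterOp G A₀ o := by
  rw [iterOp_def]; exact Set.subset_union_left

lemma gOp_subset_iterOp_succ {X : Type u} (G : Set X → Set X) (A₀ : Set X) (o : Ordinal.{u}) :
    G (iterOp G A₀ o) ⊆ iterOp G A₀ (o + 1) := by
  rw [iterOp_def G A₀ (o + 1)]
  intro x hx
  exact Or.inr (Set.mem_iUnion.2 ⟨⟨o, lt_add_one o⟩, hx⟩)

lemma iterOp_card_le {X : Type u} (G : Set X → Set X) (A₀ : Set X)
    (hcard : ∀ A : Set X, #A ≤ 𝔠 → #(G A) ≤ 𝔠) (h0 : #A₀ ≤ 𝔠) :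
    ∀ o : Ordinal.{u}, o < (Cardinal.aleph 1).ord → #(iterOp G A₀ o) ≤ 𝔠 := by
  intro o
  induction o using Ordinal.induction with
  | h o IH =>
    intro ho
    rw [iterOp_def]
    have e := (Ordinal.ToType.mk (o := o)).symm
    have hre : (⋃ w : o.ToType, G (iterOp G A₀ ((Ordinal.ToType.mk (o := o)).symm w).1)) =
        ⋃ b : Set.Iio o, G (iterOp G A₀ b.1) := by
      exact Function.Surjective.iUnion_comp (Equiv.surjective (Ordinal.ToType.mk (o := o)).symm.toEquiv)
        (fun b => G (iterOp G A₀ b.1))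
    have hU : #(⋃ b : Set.Iio o, G (iterOp G A₀ b.1)) ≤ 𝔠 := by
      rw [← hre]
      refine le_trans Cardinal.mk_iUnion_le_sum_mk ?_
      refine le_trans (Cardinal.sum_le_sum _ (fun _ => 𝔠) ?_) ?_
      · intro w
        exact hcard _ (IH _ ((Ordinal.ToType.mk (o := o)).symm w).2
          (lt_trans ((Ordinal.ToType.mk (o := o)).symm w).2 ho))
      · rw [Cardinal.sum_const']
        rw [Cardinal.mk_toType]
        have hoc : o.card < Cardinal.aleph 1 := Cardinal.lt_ord.1 ho
        calc o.card * 𝔠 ≤ 𝔠 * 𝔠 :=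
              mul_le_mul' (le_trans hoc.le Cardinal.aleph_one_le_continuum) le_rfl
          _ = 𝔠 := Cardinal.mul_eq_self Cardinal.aleph0_le_continuum
    refine le_trans (Cardinal.mk_union_le _ _) ?_
    calc #A₀ + #(⋃ b : Set.Iio o, G (iterOp G A₀ b.1)) ≤ 𝔠 + 𝔠 := add_le_add h0 hU
      _ = 𝔠 := Cardinal.add_eq_self Cardinal.aleph0_le_continuum

/-- The key transfinite recursion: given a monotone, inflationary operator `G` that
dominates sequential closure and preserves cardinality `≤ 𝔠`, we can find a set of
cardinality `≤ 𝔠` containing `A₀`, closed under sequential limits, which is a union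
of sets of the form `G A`. -/
lemma exists_good {X : Type u} [TopologicalSpace X] (G : Set X → Set X)
    (_hmono : Monotone G) (hsub : ∀ A : Set X, A ⊆ G A)
    (hseq : ∀ A : Set X, seqClosure A ⊆ G A)
    (hcard : ∀ A : Set X, #A ≤ 𝔠 → #(G A) ≤ 𝔠)
    (A₀ : Set X) (h0 : #A₀ ≤ 𝔠) :
    ∃ (ι : Type u) (s : ι → Set X),
      (∀ i, ∃ A : Set X, s i = G A) ∧ A₀ ⊆ (⋃ i, s i) ∧ #(⋃ i, s i) ≤ 𝔠 ∧
        seqClosure (⋃ i, s i) ⊆ ⋃ i, s i := by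
  set Ω : Ordinal.{u} := (Cardinal.aleph 1).ord with hΩ
  have hΩlim : Order.IsSuccLimit Ω := Cardinal.isSuccLimit_ord (Cardinal.aleph0_le_aleph 1)
  have hΩne : Ω ≠ 0 := hΩlim.pos.ne'
  haveI : Nonempty Ω.ToType := Ordinal.nonempty_toType_iff.2 hΩne
  set M : Ordinal.{u} → Set X := iterOp G A₀ with hM
  refine ⟨Ω.ToType, fun w => G (M ((Ordinal.ToType.mk (o := Ω)).symm w).1), fun w => ⟨_, rfl⟩,
    ?_, ?_, ?_⟩
  · -- A₀ ⊆ U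
    intro x hx
    obtain ⟨w⟩ := (inferInstance : Nonempty Ω.ToType)
    exact Set.mem_iUnion.2 ⟨w, hsub _ (subset_iterOp_self G A₀ _ hx)⟩
  · -- cardinality
    refine le_trans Cardinal.mk_iUnion_le_sum_mk ?_
    refine le_trans (Cardinal.sum_le_sum _ (fun _ => 𝔠) ?_) ?_
    · intro w
      exact hcard _ (iterOp_card_le G A₀ hcard h0 _ ((Ordinal.ToType.mk (o := Ω)).symm w).2)
    · rw [Cardinal.sum_const', Cardinal.mk_toType, Cardinal.card_ord]
      calc Cardinal.aleph 1 * 𝔠 ≤ 𝔠 * 𝔠 :=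
            mul_le_mul' Cardinal.aleph_one_le_continuum le_rfl
        _ = 𝔠 := Cardinal.mul_eq_self Cardinal.aleph0_le_continuum
  · -- sequential closedness
    intro x hx
    obtain ⟨u, hu, hlim⟩ := hx
    have hmemb : ∀ n : ℕ, ∃ b : Ordinal.{u}, b < Ω ∧ u n ∈ G (M b) := by
      intro n
      obtain ⟨w, hw⟩ := Set.mem_iUnion.1 (hu n)
      exact ⟨((Ordinal.ToType.mk (o := Ω)).symm w).1, ((Ordinal.ToType.mk (o := Ω)).symm w).2, hw⟩
    choose e he hue using hmemb
    set b : Ordinal.{u} := ⨆ n, e n with hb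
    have hbΩ : b < Ω :=
      Cardinal.iSup_lt_ord_lift_of_isRegular Cardinal.isRegular_aleph_one
        (by simpa using Cardinal.aleph0_lt_aleph_one) he
    have hbsucc : b + 1 < Ω := by
      have := hΩlim.succ_lt hbΩ
      simpa [Order.succ] using this
    have hseqsub : ∀ n, u n ∈ M (b + 1) := by
      intro n
      have h1 : e n ≤ b := Ordinal.le_iSup e n
      have h2 : G (M (e n)) ⊆ M (e n + 1) := gOp_subset_iterOp_succ G A₀ (e n)
      have h3 : M (e n + 1) ⊆ M (b + 1) := iterOp_mono G A₀ (by simpa using h1)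
      exact h3 (h2 (hue n))
    have hxe : x ∈ seqClosure (M (b + 1)) := ⟨u, hseqsub, hlim⟩
    have hxG : x ∈ G (M (b + 1)) := hseq _ hxe
    refine Set.mem_iUnion.2 ⟨Ordinal.ToType.mk (o := Ω) ⟨b + 1, hbsucc⟩, ?_⟩
    simpa using hxG

/-- In a sequential Hausdorff space, the closure of a set of cardinality at most `𝔠`
has cardinality at most `𝔠`. -/
lemma my_mk_closure_le {X : Type u} [TopologicalSpace X] [T2Space X] [SequentialSpace X]
    {A : Set X} (h : #A ≤ 𝔠) : #(closure A) ≤ 𝔠 := by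
  have hmono : Monotone (fun B : Set X => B ∪ seqClosure B) := by
    intro B₁ B₂ hB x hx
    rcases hx with hx | ⟨u, hu, hlim⟩
    · exact Or.inl (hB hx)
    · exact Or.inr ⟨u, fun n => hB (hu n), hlim⟩
  obtain ⟨ι, s, hsG, hA, hcard, hseq⟩ := exists_good (fun B : Set X => B ∪ seqClosure B)
    hmono (fun A => Set.subset_union_left) (fun A => Set.subset_union_right)
    (fun B hB => le_trans (Cardinal.mk_union_le _ _)
      (by
        calc #B + #(seqClosure B) ≤ 𝔠 + 𝔠 := add_le_add hB (my_mk_seqClosure_le hB)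
          _ = 𝔠 := Cardinal.add_eq_self Cardinal.aleph0_le_continuum))
    A h
  have hclosed : IsClosed (⋃ i, s i) := by
    refine IsSeqClosed.isClosed ?_
    intro u x hu hlim
    exact hseq ⟨u, hu, hlim⟩
  have : closure A ⊆ ⋃ i, s i := closure_minimal hA hclosed
  exact le_trans (Cardinal.mk_le_mk_of_subset this) hcard

/-- Every connected, locally `𝔠`, sequential Hausdorff space has cardinality
at most `𝔠`. -/
theorem stmt_19 (X : Type*) [TopologicalSpace X] [T2Space X] [ConnectedSpace X]
    [SequentialSpace X]
    (hloc : ∀ x : X, ∃ U ∈ nhds x, Cardinal.mk U ≤ Cardinal.continuum) :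
    Cardinal.mk X ≤ Cardinal.continuum := by
  choose N hN hNc using hloc
  obtain ⟨x₀⟩ := (inferInstance : Nonempty X)
  set G : Set X → Set X := fun A => ⋃ x ∈ insert x₀ (closure A), interior (N x) with hG
  have hmono : Monotone G := by
    intro A₁ A₂ hA
    exact Set.biUnion_subset_biUnion_left (Set.insert_subset_insert (closure_mono hA))
  have hclsub : ∀ A : Set X, closure A ⊆ G A := by
    intro A x hx
    exact Set.mem_biUnion (Set.mem_insert_of_mem _ hx) (mem_interior_iff_mem_nhds.2 (hN x))
  have hsub : ∀ A : Set X, A ⊆ G A := fun A => subset_closure.trans (hclsub A)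
  have hseq : ∀ A : Set X, seqClosure A ⊆ G A :=
    fun A => seqClosure_subset_closure.trans (hclsub A)
  have hcard : ∀ A : Set X, #A ≤ 𝔠 → #(G A) ≤ 𝔠 := by
    intro A hA
    have h1 : #(insert x₀ (closure A) : Set X) ≤ 𝔠 := by
      refine le_trans Cardinal.mk_insert_le ?_
      calc #(closure A) + 1 ≤ 𝔠 + 𝔠 :=
            add_le_add (my_mk_closure_le hA) (le_trans one_le_aleph0 Cardinal.aleph0_le_continuum)
        _ = 𝔠 := Cardinal.add_eq_self Cardinal.aleph0_le_continuum
    have : G A = ⋃ x : (insert x₀ (closure A) : Set X), interior (N x) := by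
      rw [hG]; exact Set.biUnion_eq_iUnion _ _
    rw [this]
    refine le_trans Cardinal.mk_iUnion_le_sum_mk ?_
    refine le_trans (Cardinal.sum_le_sum _ (fun _ => 𝔠) ?_) ?_
    · intro x
      exact le_trans (Cardinal.mk_le_mk_of_subset interior_subset) (hNc x)
    · rw [Cardinal.sum_const']
      calc #(insert x₀ (closure A) : Set X) * 𝔠 ≤ 𝔠 * 𝔠 := mul_le_mul' h1 le_rfl
        _ = 𝔠 := Cardinal.mul_eq_self Cardinal.aleph0_le_continuum
  obtain ⟨ι, s, hsG, hA, hcardU, hseqU⟩ := exists_good G hmono hsub hseq hcard {x₀}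
    ((Cardinal.mk_singleton x₀).le.trans (one_le_aleph0.trans Cardinal.aleph0_le_continuum))
  set U : Set X := ⋃ i, s i with hU
  have hopen : IsOpen U := by
    refine isOpen_iUnion ?_
    intro i
    obtain ⟨A, hiA⟩ := hsG i
    rw [hiA, hG]
    exact isOpen_biUnion fun x _ => isOpen_interior
  have hclosed : IsClosed U := by
    refine IsSeqClosed.isClosed ?_
    intro u x hu hlim
    exact hseqU ⟨u, hu, hlim⟩
  have hne : U.Nonempty := ⟨x₀, hA rfl⟩
  have huniv : U = Set.univ := IsClopen.eq_univ ⟨hclosed, hopen⟩ hne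
  calc #X = #(Set.univ : Set X) := Cardinal.mk_univ.symm
    _ = #U := by rw [huniv]
    _ ≤ 𝔠 := hcardU
end
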